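/- Let n ≥ 1, H > 0, E < 0, and suppose 0 < x1 < x2 satisfy x^{4n−2} − (E + H x^{2n})^2 = 0 at x = x1 and x = x2, with x^{4n−2} − (E + H x^{2n})^2 > 0 on (x1, x2). If the improper integral t_2 = ∫_{x1}^{x2} (E + H x^{2n}) x / sqrt(x^{4n−2} − (E + H x^{2n})^2) dx converges, then t_2 = (1/(2nH)) ∫_{x1}^{x2} (2(n−1) x^{−2n+1} (E + H x^{2n})^2 + x^{2n−1}) / sqrt(x^{4n−2} − (E + H x^{2n})^2) dx, and in particular t_2 > 0. -/

import Mathlib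

open Real Set MeasureTheory intervalIntegral

theorem nodoid_aux (m : ℕ) (H E : ℝ) (hH : 0 < H) (x₁ x₂ : ℝ) (hx₁ : 0 < x₁) (h12 : x₁ < x₂)
    (hroot₁ : x₁ ^ (4*m+2) - (E + H*x₁^(2*m+2))^2 = 0)
    (hroot₂ : x₂ ^ (4*m+2) - (E + H*x₂^(2*m+2))^2 = 0)
    (hpos : ∀ x ∈ Ioo x₁ x₂, 0 < x ^ (4*m+2) - (E + H*x^(2*m+2))^2)
    (hint : IntegrableOn
      (fun x : ℝ => (E + H*x^(2*m+2)) * x / Real.sqrt (x ^ (4*m+2) - (E + H*x^(2*m+2))^2))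
      (Ioo x₁ x₂) volume) :
    (∫ x in x₁..x₂, (2*(m:ℝ) * (x^(2*m+1))⁻¹ * (E + H*x^(2*m+2))^2 + x^(2*m+1))
        / Real.sqrt (x ^ (4*m+2) - (E + H*x^(2*m+2))^2))
      = (2*((m:ℝ)+1)*H) *
        ∫ x in x₁..x₂, (E + H*x^(2*m+2)) * x / Real.sqrt (x ^ (4*m+2) - (E + H*x^(2*m+2))^2)
    ∧ 0 < ∫ x in x₁..x₂, (2*(m:ℝ) * (x^(2*m+1))⁻¹ * (E + H*x^(2*m+2))^2 + x^(2*m+1))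
        / Real.sqrt (x ^ (4*m+2) - (E + H*x^(2*m+2))^2) := by
  set f : ℝ → ℝ := fun x => (E + H*x^(2*m+2)) * x
      / Real.sqrt (x ^ (4*m+2) - (E + H*x^(2*m+2))^2) with hfdef
  set g : ℝ → ℝ := fun x => (2*(m:ℝ) * (x^(2*m+1))⁻¹ * (E + H*x^(2*m+2))^2 + x^(2*m+1))
      / Real.sqrt (x ^ (4*m+2) - (E + H*x^(2*m+2))^2) with hgdef
  set c : ℝ := 2*((m:ℝ)+1)*H with hcdef
  have hc : 0 < c := by positivity
  -- interval integrability of f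
  have hfi : IntervalIntegrable f volume x₁ x₂ := by
    rw [intervalIntegrable_iff_integrableOn_Ioc_of_le h12.le]
    exact hint.congr_set_ae (Ioo_ae_eq_Ioc).symm
  -- continuity of f on Ioo
  have hcf : ∀ x ∈ Ioo x₁ x₂, ContinuousAt f x := by
    intro x hx
    exact ContinuousAt.div (by fun_prop) (by fun_prop)
      (ne_of_gt (Real.sqrt_pos.2 (hpos x hx)))
  have hcfOn : ContinuousOn f (Ioo x₁ x₂) := fun x hx => (hcf x hx).continuousWithinAt
  set F : ℝ → ℝ := fun y => ∫ t in x₁..y, f t with hFdef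
  set φ : ℝ → ℝ := fun y => (y^(2*m))⁻¹
      * Real.sqrt (y ^ (4*m+2) - (E + H*y^(2*m+2))^2) with hφdef
  set ψ : ℝ → ℝ := fun y => φ y + c * F y with hψdef
  -- derivative of F
  have hF : ∀ x ∈ Ioo x₁ x₂, HasDerivAt F (f x) x := by
    intro x hx
    refine intervalIntegral.integral_hasDerivAt_right
      (hfi.mono_set (uIcc_subset_uIcc left_mem_uIcc ?_))
      (hcfOn.stronglyMeasurableAtFilter isOpen_Ioo x hx) (hcf x hx)
    rw [uIcc_of_le h12.le]; exact Ioo_subset_Icc_self hx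
  -- derivative of ψ
  have hψd : ∀ x ∈ Ioo x₁ x₂, HasDerivAt ψ (g x) x := by
    intro x hx
    have hx0 : 0 < x := lt_trans hx₁ hx.1
    have hQ : 0 < x ^ (4*m+2) - (E + H*x^(2*m+2))^2 := hpos x hx
    have hs : 0 < Real.sqrt (x ^ (4*m+2) - (E + H*x^(2*m+2))^2) := Real.sqrt_pos.2 hQ
    have h1 := hasDerivAt_pow (4*m+2) x
    have h2 := ((hasDerivAt_pow (2*m+2) x).const_mul H).const_add E
    have hQd := h1.sub (h2.pow 2)
    have hsq := hQd.sqrt (ne_of_gt hQ)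
    have hz0 := hasDerivAt_zpow (-(2*(m:ℤ))) x (Or.inl hx0.ne')
    have hz : HasDerivAt (fun y : ℝ => (y^(2*m))⁻¹)
        ((-(2*(m:ℝ))) * x ^ (-(2*(m:ℤ)) - 1)) x := by
      have hfun : (fun y : ℝ => (y^(2*m))⁻¹) = fun y : ℝ => y ^ (-(2*(m:ℤ))) := by
        funext y
        rw [zpow_neg, show (2*(m:ℤ)) = ((2*m : ℕ) : ℤ) by push_cast; ring, zpow_natCast]
      rw [hfun]
      refine hz0.congr_deriv (Eq.symm ?_)
      push_cast
      ring
    have hφd := hz.mul hsq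
    have hψd0 := hφd.add ((hF x hx).const_mul c)
    refine hψd0.congr_deriv (Eq.symm ?_)
    have hss : Real.sqrt (x ^ (4*m+2) - (E + H*x^(2*m+2))^2) ^ 2
        = x ^ (4*m+2) - (E + H*x^(2*m+2))^2 := Real.sq_sqrt hQ.le
    simp only [hgdef, hφdef, hfdef, hcdef]
    rw [show (-(2*(m:ℤ)) - 1) = -((2*m+1 : ℕ) : ℤ) by push_cast; ring, zpow_neg, zpow_natCast]
    simp only [show 4*m+2-1 = 4*m+1 from by omega, show 2*m+2-1 = 2*m+1 from by omega,
      pow_one]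
    push_cast
    generalize Real.sqrt (x ^ (4*m+2) - (E + H*x^(2*m+2))^2) = s at hs hss ⊢
    field_simp
    linear_combination (4*(m:ℝ) * x^(2*m)) * hss
  -- continuity of ψ on Icc
  have hφc : ContinuousOn φ (Icc x₁ x₂) := by
    apply ContinuousOn.mul
    · exact ((continuous_pow (2*m)).continuousOn).inv₀
        (fun x hx => pow_ne_zero _ (ne_of_gt (lt_of_lt_of_le hx₁ hx.1)))
    · fun_prop
  have hFc : ContinuousOn F (Icc x₁ x₂) := by
    have := continuousOn_primitive_interval' hfi (left_mem_uIcc (a := x₁) (b := x₂))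
    rwa [uIcc_of_le h12.le] at this
  have hψc : ContinuousOn ψ (Icc x₁ x₂) := hφc.add (hFc.const_smul c)
  -- integrability of g
  have hgpos : ∀ x ∈ Ioo x₁ x₂, 0 < g x := by
    intro x hx
    have hx0 : 0 < x := lt_trans hx₁ hx.1
    apply div_pos
    · have h1 : (0:ℝ) ≤ 2*(m:ℝ) * (x^(2*m+1))⁻¹ * (E + H*x^(2*m+2))^2 :=
        mul_nonneg (mul_nonneg (by positivity) (inv_nonneg.2 (pow_nonneg hx0.le _))) (sq_nonneg _)
      have h2 : (0:ℝ) < x^(2*m+1) := pow_pos hx0 _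
      linarith
    · exact Real.sqrt_pos.2 (hpos x hx)
  have hgInt : IntervalIntegrable g volume x₁ x₂ := by
    rw [intervalIntegrable_iff_integrableOn_Ioc_of_le h12.le]
    exact integrableOn_deriv_of_nonneg hψc hψd (fun x hx => (hgpos x hx).le)
  -- FTC
  have hFTC : ∫ x in x₁..x₂, g x = ψ x₂ - ψ x₁ :=
    integral_eq_sub_of_hasDerivAt_of_le h12.le hψc hψd hgInt
  have hψ1 : ψ x₁ = 0 := by
    simp [hψdef, hφdef, hFdef, hroot₁, intervalIntegral.integral_same]
  have hψ2 : ψ x₂ = c * F x₂ := by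
    simp [hψdef, hφdef, hroot₂]
  constructor
  · rw [hFTC, hψ1, hψ2, sub_zero]
  · exact intervalIntegral_pos_of_pos_on hgInt hgpos h12

/-- The period integral of a nodoid solution: if the improper integral
`t₂ = ∫_{x₁}^{x₂} (E+Hx^{2n})x/√(x^{4n-2}-(E+Hx^{2n})²) dx` converges, then it equals
`(1/(2nH)) ∫_{x₁}^{x₂} (2(n-1)x^{-2n+1}(E+Hx^{2n})² + x^{2n-1})/√(...) dx`, and is
strictly positive. -/
theorem nodoid_period_positive (n : ℕ) (hn : 1 ≤ n) (H E : ℝ) (hH : 0 < H) (hE : E < 0)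
    (x₁ x₂ : ℝ) (hx₁ : 0 < x₁) (h12 : x₁ < x₂)
    (hroot₁ : x₁ ^ (4*n-2) - (E + H*x₁^(2*n))^2 = 0)
    (hroot₂ : x₂ ^ (4*n-2) - (E + H*x₂^(2*n))^2 = 0)
    (hpos : ∀ x ∈ Ioo x₁ x₂, 0 < x ^ (4*n-2) - (E + H*x^(2*n))^2)
    (hint : IntegrableOn
      (fun x : ℝ => (E + H*x^(2*n)) * x / Real.sqrt (x ^ (4*n-2) - (E + H*x^(2*n))^2))
      (Ioo x₁ x₂) volume) :
    (∫ x in x₁..x₂, (E + H*x^(2*n)) * x / Real.sqrt (x ^ (4*n-2) - (E + H*x^(2*n))^2))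
      = (1/(2*(n:ℝ)*H)) *
        ∫ x in x₁..x₂,
          (2*((n:ℝ)-1) * x ^ (1 - 2*(n:ℤ)) * (E + H*x^(2*n))^2 + x^(2*n-1))
            / Real.sqrt (x ^ (4*n-2) - (E + H*x^(2*n))^2)
    ∧ 0 < ∫ x in x₁..x₂,
        (E + H*x^(2*n)) * x / Real.sqrt (x ^ (4*n-2) - (E + H*x^(2*n))^2) := by
  obtain ⟨m, rfl⟩ : ∃ m, n = m + 1 := ⟨n - 1, (Nat.succ_pred_eq_of_pos hn).symm⟩
  simp only [show 4*(m+1)-2 = 4*m+2 from by omega, show 2*(m+1) = 2*m+2 from by omega,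
    show 2*(m+1)-1 = 2*m+1 from by omega, show 2*m+2-1 = 2*m+1 from by omega,
    show (1 - 2*((m+1:ℕ):ℤ)) = -((2*m+1 : ℕ) : ℤ) from by push_cast; ring,
    zpow_neg, zpow_natCast,
    show ((m+1:ℕ):ℝ) = (m:ℝ)+1 from by push_cast; ring,
    add_sub_cancel_right] at hroot₁ hroot₂ hpos hint ⊢
  obtain ⟨h1, h2⟩ := nodoid_aux m H E hH x₁ x₂ hx₁ h12 hroot₁ hroot₂ hpos hint
  have hc : (0:ℝ) < 2*((m:ℝ)+1)*H := by positivity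
  constructor
  · rw [h1, one_div, inv_mul_cancel_left₀ hc.ne']
  · rw [h1] at h2
    nlinarith [h2, hc]
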